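/- Let b > 0, λ₀ ∈ ℝ, and v(τ) = −√(2b)·tanh(√(2b)·τ/2). Suppose (y, x) : ℝ → ℝ² solves the system y' = −(v/4)·y + λ₀·x, x' = y + (v/4)·x. Then y is C² and satisfies the scalar second-order equation y'' = f(τ)·y where f(τ) = (b/8)·(1 − tanh²(√(2b)·τ/2)) + λ₀ + b/8. In particular, if λ₀ > −b/8 then f(τ) > 0 for all τ and lim_{τ→±∞} f(τ) = λ₀ + b/8 > 0. -/

import Mathlib

private lemma myHasDerivAt_tanh (x : ℝ) :
    HasDerivAt Real.tanh (1 - Real.tanh x ^ 2) x := by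
  have h := (Real.hasDerivAt_sinh x).div (Real.hasDerivAt_cosh x) (Real.cosh_pos x).ne'
  have heq : Real.tanh = Real.sinh / Real.cosh :=
    funext fun x => Real.tanh_eq_sinh_div_cosh x
  rw [← heq] at h
  refine h.congr_deriv ?_
  have hc := Real.cosh_sq_sub_sinh_sq x
  have hc0 := (Real.cosh_pos x).ne'
  rw [Real.tanh_eq_sinh_div_cosh]
  field_simp

private lemma mytanh_eq (x : ℝ) : Real.tanh x = 1 - 2 / (Real.exp (2 * x) + 1) := by
  have h1 : (0:ℝ) < Real.exp x := Real.exp_pos x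
  have h2 : Real.exp (2 * x) = Real.exp x * Real.exp x := by
    rw [← Real.exp_add]; ring_nf
  rw [Real.tanh_eq_sinh_div_cosh, Real.sinh_eq, Real.cosh_eq, Real.exp_neg, h2]
  have h3 : Real.exp x * Real.exp x + 1 > 0 := by positivity
  field_simp
  ring

private lemma mytanh_sq_lt_one (x : ℝ) : Real.tanh x ^ 2 < 1 := by
  have hc := Real.cosh_sq_sub_sinh_sq x
  have hp := Real.cosh_pos x
  rw [Real.tanh_eq_sinh_div_cosh, div_pow, div_lt_one (by positivity)]
  nlinarith

private lemma mytanh_atTop : Filter.Tendsto Real.tanh Filter.atTop (nhds 1) := by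
  have h : Filter.Tendsto (fun x : ℝ => 1 - 2 / (Real.exp (2 * x) + 1))
      Filter.atTop (nhds 1) := by
    have he : Filter.Tendsto (fun x : ℝ => Real.exp (2 * x) + 1) Filter.atTop Filter.atTop :=
      (Real.tendsto_exp_atTop.comp
        (Filter.tendsto_id.const_mul_atTop (by norm_num : (0:ℝ) < 2))).atTop_add
        tendsto_const_nhds
    have : Filter.Tendsto (fun x : ℝ => 2 / (Real.exp (2 * x) + 1)) Filter.atTop (nhds 0) :=
      Filter.Tendsto.div_atTop tendsto_const_nhds he
    simpa using tendsto_const_nhds.sub this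
  exact h.congr fun x => (mytanh_eq x).symm

private lemma mytanh_atBot : Filter.Tendsto Real.tanh Filter.atBot (nhds (-1)) := by
  have he : Filter.Tendsto (fun x : ℝ => Real.exp (2 * x) + 1) Filter.atBot (nhds 1) := by
    have : Filter.Tendsto (fun x : ℝ => Real.exp (2 * x)) Filter.atBot (nhds 0) :=
      Real.tendsto_exp_atBot.comp (Filter.tendsto_id.const_mul_atBot (by norm_num : (0:ℝ) < 2))
    simpa using this.add (tendsto_const_nhds : Filter.Tendsto _ _ (nhds (1:ℝ)))
  have h : Filter.Tendsto (fun x : ℝ => 1 - 2 / (Real.exp (2 * x) + 1))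
      Filter.atBot (nhds (-1)) := by
    have := (tendsto_const_nhds : Filter.Tendsto (fun _ : ℝ => (2:ℝ)) _ _).div he one_ne_zero
    have h2 := (tendsto_const_nhds : Filter.Tendsto (fun _ : ℝ => (1:ℝ)) Filter.atBot _).sub this
    norm_num at h2
    exact h2
  exact h.congr fun x => (mytanh_eq x).symm

private lemma mycontinuous_tanh : Continuous Real.tanh :=
  (Real.continuous_sinh.div Real.continuous_cosh fun x => (Real.cosh_pos x).ne').congr
    fun x => (Real.tanh_eq_sinh_div_cosh x).symm

/-- If `(y,x)` solves `y' = −(v/4)y + λ₀x`, `x' = y + (v/4)x` with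
`v(τ) = −√(2b)tanh(√(2b)τ/2)`, then `y` is `C²` and `y'' = f·y` with
`f(τ) = (b/8)(1 − tanh²(√(2b)τ/2)) + λ₀ + b/8`; if `λ₀ > −b/8` then `f > 0` everywhere
and `f → λ₀ + b/8 > 0` at `±∞`. -/
theorem stmt15 (b lam : ℝ) (hb : 0 < b) (v f y x : ℝ → ℝ)
    (hv : v = fun τ => -Real.sqrt (2 * b) * Real.tanh (Real.sqrt (2 * b) * τ / 2))
    (hfdef : f = fun τ =>
      b / 8 * (1 - Real.tanh (Real.sqrt (2 * b) * τ / 2) ^ 2) + lam + b / 8)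
    (hy : ∀ τ, HasDerivAt y (-(v τ / 4) * y τ + lam * x τ) τ)
    (hx : ∀ τ, HasDerivAt x (y τ + (v τ / 4) * x τ) τ) :
    ContDiff ℝ 2 y ∧
    (∀ τ, deriv (deriv y) τ = f τ * y τ) ∧
    (lam > -b / 8 →
      (∀ τ, 0 < f τ) ∧
      Filter.Tendsto f Filter.atTop (nhds (lam + b / 8)) ∧
      Filter.Tendsto f Filter.atBot (nhds (lam + b / 8)) ∧
      0 < lam + b / 8) := by
  set c := Real.sqrt (2 * b) with hcdef
  have hc0 : 0 < c := Real.sqrt_pos.mpr (by linarith)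
  have hc2 : c ^ 2 = 2 * b := Real.sq_sqrt (by linarith)
  -- derivative of v
  have hvd : ∀ τ, HasDerivAt v (-b * (1 - Real.tanh (c * τ / 2) ^ 2)) τ := by
    intro τ
    have h1 : HasDerivAt (fun τ : ℝ => c * τ / 2) (c / 2) τ := by
      simpa using ((hasDerivAt_id τ).const_mul c).div_const 2
    have h2 := ((myHasDerivAt_tanh (c * τ / 2)).comp τ h1).const_mul (-c)
    rw [hv]
    refine h2.congr_deriv ?_
    linear_combination (-(1 - Real.tanh (c * τ / 2) ^ 2) / 2) * hc2
  -- derivative of y' = g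
  set g : ℝ → ℝ := fun τ => -(v τ / 4) * y τ + lam * x τ with hg
  have hgd : ∀ τ, HasDerivAt g (f τ * y τ) τ := by
    intro τ
    have h1 := (((hvd τ).div_const 4).neg.mul (hy τ)).add ((hx τ).const_mul lam)
    refine h1.congr_deriv (Eq.symm ?_)
    simp only [Pi.neg_apply]
    have hvτ : v τ = -c * Real.tanh (c * τ / 2) := by rw [hv]
    rw [hfdef, hvτ]
    linear_combination (-(Real.tanh (c * τ / 2) ^ 2 * y τ) / 16) * hc2
  have hdy : deriv y = g := funext fun τ => (hy τ).deriv
  have hdg : deriv g = fun τ => f τ * y τ := funext fun τ => (hgd τ).deriv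
  have hydiff : Differentiable ℝ y := fun τ => (hy τ).differentiableAt
  have hycont : Continuous y := hydiff.continuous
  have hct : Continuous (fun τ : ℝ => Real.tanh (c * τ / 2)) :=
    mycontinuous_tanh.comp (by continuity)
  have hfcont : Continuous f := by
    rw [hfdef]
    exact ((continuous_const.mul (continuous_const.sub (hct.pow 2))).add
      continuous_const).add continuous_const
  refine ⟨?_, ?_, ?_⟩
  · rw [show ((2 : WithTop ℕ∞)) = (1 + 1 : WithTop ℕ∞) by norm_num, contDiff_succ_iff_deriv]
    refine ⟨fun τ => (hy τ).differentiableAt, by simp, ?_⟩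
    rw [hdy, contDiff_one_iff_deriv, hdg]
    exact ⟨fun τ => (hgd τ).differentiableAt, hfcont.mul hycont⟩
  · intro τ
    rw [hdy]
    exact (hgd τ).deriv
  · intro hl
    refine ⟨?_, ?_, ?_, by linarith⟩
    · intro τ
      have ht := mytanh_sq_lt_one (c * τ / 2)
      rw [hfdef]
      nlinarith
    · have hs : Filter.Tendsto (fun τ : ℝ => c * τ / 2) Filter.atTop Filter.atTop := by
        have := Filter.tendsto_id.const_mul_atTop (show (0:ℝ) < c / 2 by positivity)
        exact this.congr fun τ => by simp [id]; ring
      have h1 := mytanh_atTop.comp hs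
      have h3 := ((((tendsto_const_nhds : Filter.Tendsto (fun _ : ℝ => (1:ℝ))
          Filter.atTop (nhds 1)).sub ((h1 : Filter.Tendsto
          (fun τ : ℝ => Real.tanh (c * τ / 2)) _ _).pow 2)).const_mul (b / 8)).add_const
          lam).add_const (b / 8)
      rw [hfdef]
      convert h3 using 2
      all_goals norm_num
    · have hs : Filter.Tendsto (fun τ : ℝ => c * τ / 2) Filter.atBot Filter.atBot := by
        have := Filter.tendsto_id.const_mul_atBot (show (0:ℝ) < c / 2 by positivity)
        exact this.congr fun τ => by simp [id]; ring
      have h1 := mytanh_atBot.comp hs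
      have h3 := ((((tendsto_const_nhds : Filter.Tendsto (fun _ : ℝ => (1:ℝ))
          Filter.atBot (nhds 1)).sub ((h1 : Filter.Tendsto
          (fun τ : ℝ => Real.tanh (c * τ / 2)) _ _).pow 2)).const_mul (b / 8)).add_const
          lam).add_const (b / 8)
      rw [hfdef]
      convert h3 using 2
      all_goals norm_num
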